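/- For every t > 0 and every β ∈ (0,1], Φ̄(βt) ≤ Φ̄(t)^{β²}, where Φ̄(t) is the probability that a standard normal random variable is at least t. -/

import Mathlib

open ProbabilityTheory MeasureTheory Real Set Filter Topology

noncomputable def phi (x : ℝ) : ℝ := (√(2 * π))⁻¹ * rexp (-x ^ 2 / 2)

noncomputable def Phib (t : ℝ) : ℝ := ∫ x in Set.Ici t, phi x

lemma phi_eq (x : ℝ) : gaussianPDFReal 0 1 x = phi x := by
  simp [gaussianPDFReal, phi]

lemma phi_pos (x : ℝ) : 0 < phi x := by unfold phi; positivity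

lemma phi_cont : Continuous phi := by
  unfold phi; fun_prop

lemma phi_integrable : Integrable phi := by
  have := integrable_gaussianPDFReal 0 1
  simpa [funext phi_eq] using this

lemma phi_integral_one : ∫ x, phi x = 1 := by
  have := integral_gaussianPDFReal_eq_one 0 (one_ne_zero)
  simpa [funext phi_eq] using this

lemma gauss_apply (t : ℝ) : gaussianReal 0 1 {x | t ≤ x} = ENNReal.ofReal (Phib t) := by
  rw [gaussianReal_apply_eq_integral 0 one_ne_zero]
  congr 1
  rw [show {x | t ≤ x} = Set.Ici t from rfl]
  exact setIntegral_congr_fun measurableSet_Ici fun x _ => phi_eq x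



lemma Phib_pos (t : ℝ) : 0 < Phib t := by
  rw [Phib]
  rw [setIntegral_pos_iff_support_of_nonneg_ae (ae_of_all _ fun x => (phi_pos x).le)
    phi_integrable.integrableOn]
  have hs : Function.support phi = Set.univ :=
    by ext x; simp [Function.mem_support, (phi_pos x).ne']
  rw [hs, Set.univ_inter]
  simp

lemma integral_Iic_phi (t : ℝ) : (∫ x in Set.Iic t, phi x) = 1 - Phib t := by
  have h := integral_add_compl (s := Set.Iic t) measurableSet_Iic phi_integrable (f := phi)
  rw [compl_Iic, phi_integral_one] at h
  have h2 : (∫ x in Set.Ioi t, phi x) = Phib t := (integral_Ici_eq_integral_Ioi).symm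
  linarith

lemma Phib_eq (t : ℝ) : Phib t = Phib 0 - ∫ x in (0:ℝ)..t, phi x := by
  have h := intervalIntegral.integral_Iic_sub_Iic (f := phi) (μ := volume)
    phi_integrable.integrableOn phi_integrable.integrableOn (a := 0) (b := t)
  rw [integral_Iic_phi, integral_Iic_phi] at h
  linarith

lemma Phib_hasDeriv (t : ℝ) : HasDerivAt Phib (-phi t) t := by
  have h2 : HasDerivAt (fun u => ∫ x in (0:ℝ)..u, phi x) (phi t) t :=
    intervalIntegral.integral_hasDerivAt_right (phi_integrable.intervalIntegrable)
      ⟨Set.univ, univ_mem, phi_cont.aestronglyMeasurable.restrict⟩ phi_cont.continuousAt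
  have h : HasDerivAt (fun u => Phib 0 - ∫ x in (0:ℝ)..u, phi x) (-phi t) t := by
    simpa using (h2.const_sub (Phib 0))
  exact h.congr_of_eventuallyEq (by filter_upwards with u; rw [Phib_eq u])

lemma Phib_zero : Phib 0 = 1 / 2 := by
  have h1 : (∫ x in Set.Iic (-(0:ℝ)), phi x) = Phib 0 := by
    rw [← integral_comp_neg_Ioi]
    have : ∀ x, phi (-x) = phi x := fun x => by simp [phi, neg_pow]
    simp_rw [this]
    rw [← integral_Ici_eq_integral_Ioi]; rfl
  rw [neg_zero] at h1
  have h2 := integral_Iic_phi 0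
  linarith


lemma integral_shift (t : ℝ) : (∫ x in Set.Ici t, phi (x - t)) = Phib 0 := by
  have h := MeasurePreserving.setIntegral_preimage_emb
    (measurePreserving_add_right volume t)
    (MeasurableEquiv.addRight t).measurableEmbedding (fun y => phi (y - t)) (Set.Ici t)
  have hpre : (· + t) ⁻¹' (Set.Ici t) = Set.Ici 0 := by
    ext x; simp [Set.mem_Ici]
  rw [hpre] at h
  simp only [add_sub_cancel_right] at h
  exact h.symm

lemma Phib_upper {t : ℝ} (ht : 0 ≤ t) : Phib t ≤ (1/2) * rexp (-t ^ 2 / 2) := by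
  have key : Phib t ≤ ∫ x in Set.Ici t, rexp (-t ^ 2 / 2) * phi (x - t) := by
    refine setIntegral_mono_on phi_integrable.integrableOn ?_ measurableSet_Ici ?_
    · exact ((phi_integrable.comp_sub_right t).const_mul _).integrableOn
    · intro x hx
      rw [Set.mem_Ici] at hx
      simp only [phi]
      rw [mul_comm (rexp (-t^2/2)), mul_assoc, ← Real.exp_add]
      have : -x ^ 2 / 2 ≤ -(x - t) ^ 2 / 2 + -t ^ 2 / 2 := by nlinarith
      exact mul_le_mul_of_nonneg_left (Real.exp_le_exp.2 this) (by positivity)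
  rw [integral_const_mul, integral_shift, Phib_zero] at key
  linarith

lemma Phib_tendsto : Tendsto Phib atTop (𝓝 0) := by
  have h1 : Tendsto (fun t : ℝ => (1/2) * rexp (-t ^ 2 / 2)) atTop (𝓝 0) := by
    rw [show (0:ℝ) = (1/2) * 0 by ring]
    refine Tendsto.const_mul _ (Real.tendsto_exp_atBot.comp ?_)
    have : Tendsto (fun t : ℝ => t ^ 2 / 2) atTop atTop :=
      (tendsto_pow_atTop two_ne_zero).atTop_div_const two_pos
    simpa [neg_div] using tendsto_neg_atBot_iff.mpr this
  refine squeeze_zero' (Filter.Eventually.of_forall fun t => (Phib_pos t).le) ?_ h1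
  filter_upwards [eventually_ge_atTop (0:ℝ)] with t ht using Phib_upper ht

lemma phi_hasDeriv (t : ℝ) : HasDerivAt phi (-t * phi t) t := by
  have h1 : HasDerivAt (fun x : ℝ => -x ^ 2 / 2) (-t) t := by
    have := ((hasDerivAt_pow 2 t).neg).div_const 2
    simpa using this.congr_deriv (by ring)
  have h2 := (h1.exp).const_mul (√(2 * π))⁻¹
  exact h2.congr_deriv (by simp [phi]; ring)

lemma Phib_lower {t : ℝ} (ht : 0 ≤ t) : t * phi t / (1 + t ^ 2) ≤ Phib t := by
  set g : ℝ → ℝ := fun t => Phib t - t * phi t / (1 + t ^ 2) with hg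
  have hderiv : ∀ x : ℝ, HasDerivAt g (-2 * phi x / (1 + x ^ 2) ^ 2) x := by
    intro x
    have h1 : HasDerivAt (fun x : ℝ => x * phi x) (phi x + x * (-x * phi x)) x := by
      have := (hasDerivAt_id x).mul (phi_hasDeriv x)
      simpa [Pi.mul_def] using this.congr_deriv (by simp)
    have h2 : HasDerivAt (fun x : ℝ => 1 + x ^ 2) (2 * x) x := by
      simpa using (hasDerivAt_pow 2 x).const_add 1
    have hne : (1 + x ^ 2) ≠ 0 := by positivity
    have h3 := h1.div h2 hne
    have h4 := (Phib_hasDeriv x).sub h3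
    refine h4.congr_deriv ?_
    field_simp
    ring
  have hanti : Antitone g := by
    refine antitone_of_deriv_nonpos (fun x => (hderiv x).differentiableAt) fun x => ?_
    rw [(hderiv x).deriv]
    have := phi_pos x
    have h5 : (0:ℝ) < (1 + x ^ 2) ^ 2 := by positivity
    rw [div_nonpos_iff]
    right; constructor <;> nlinarith
  have hphi0 : Tendsto phi atTop (𝓝 0) := by
    rw [show (0:ℝ) = (√(2 * π))⁻¹ * 0 by ring]
    refine Tendsto.const_mul _ (Real.tendsto_exp_atBot.comp ?_)
    have : Tendsto (fun t : ℝ => t ^ 2 / 2) atTop atTop :=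
      (tendsto_pow_atTop two_ne_zero).atTop_div_const two_pos
    simpa [neg_div] using tendsto_neg_atBot_iff.mpr this
  have htail : Tendsto (fun t : ℝ => t * phi t / (1 + t ^ 2)) atTop (𝓝 0) := by
    refine squeeze_zero' ?_ ?_ hphi0
    · filter_upwards [eventually_ge_atTop (0:ℝ)] with x hx
      have := phi_pos x
      positivity
    · filter_upwards [eventually_ge_atTop (0:ℝ)] with x hx
      have hp := phi_pos x
      rw [div_le_iff₀ (by positivity)]
      nlinarith [mul_nonneg hp.le (sq_nonneg (x - 1/2))]
  have htend : Tendsto g atTop (𝓝 0) := by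
    rw [show (0:ℝ) = 0 - 0 by ring]
    exact Phib_tendsto.sub htail
  have := hanti.le_of_tendsto htend t
  rw [hg] at this
  linarith [this]


lemma key_ineq {t : ℝ} (ht : 0 < t) :
    t * phi t ≤ -2 * Phib t * Real.log (Phib t) := by
  have hP := Phib_pos t
  have hup := Phib_upper ht.le
  have hlog : Real.log (Phib t) ≤ -Real.log 2 - t ^ 2 / 2 := by
    calc Real.log (Phib t) ≤ Real.log ((1/2) * rexp (-t ^ 2 / 2)) :=
          Real.log_le_log hP hup
      _ = -Real.log 2 - t ^ 2 / 2 := by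
          rw [Real.log_mul (by norm_num) (Real.exp_ne_zero _), Real.log_exp]
          rw [show (1:ℝ)/2 = 2⁻¹ by norm_num, Real.log_inv]
          ring
  have hlo := Phib_lower ht.le
  have hlog2 : (1/2 : ℝ) < Real.log 2 := by
    have := Real.log_two_gt_d9; linarith
  have hphi := phi_pos t
  -- -2 * Phib t * log (Phib t) ≥ Phib t * (t^2 + 2 log 2) ≥ (t * phi t/(1+t^2)) * (t^2+1) ≥ t phi t
  have h1 : Phib t * (t ^ 2 + 2 * Real.log 2) ≤ -2 * Phib t * Real.log (Phib t) := by
    nlinarith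
  have h2 : t * phi t ≤ Phib t * (t ^ 2 + 2 * Real.log 2) := by
    have hd : (0:ℝ) < 1 + t ^ 2 := by positivity
    rw [div_le_iff₀ hd] at hlo
    nlinarith [mul_nonneg (mul_nonneg ht.le hphi.le) (by linarith : (0:ℝ) ≤ 2 * Real.log 2 - 1)]
  linarith

lemma R_mono : MonotoneOn (fun t => Real.log (Phib t) / t ^ 2) (Set.Ioi (0:ℝ)) := by
  have hR : ∀ x ∈ Set.Ioi (0:ℝ), HasDerivAt (fun t => Real.log (Phib t) / t ^ 2)
      ((-phi x / Phib x * x ^ 2 - Real.log (Phib x) * (2 * x ^ 1)) / (x ^ 2) ^ 2) x := by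
    intro x hx
    have hx0 : x ≠ 0 := ne_of_gt hx
    exact ((Phib_hasDeriv x).log (Phib_pos x).ne').div (hasDerivAt_pow 2 x) (by positivity)
  refine monotoneOn_of_deriv_nonneg (convex_Ioi 0) ?_ ?_ ?_
  · exact fun x hx => ((hR x hx).continuousAt).continuousWithinAt
  · rw [interior_Ioi]
    exact fun x hx => ((hR x hx).differentiableAt).differentiableWithinAt
  · rw [interior_Ioi]
    intro x hx
    rw [(hR x hx).deriv]
    have hx0 : (0:ℝ) < x := hx
    have hkey := key_ineq hx0
    have hP := Phib_pos x
    have h1 : (0:ℝ) < (x ^ 2) ^ 2 := by positivity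
    refine div_nonneg ?_ h1.le
    have : -phi x / Phib x * x ^ 2 = -(x * phi x) * x / Phib x := by ring
    rw [this]
    have expand : -(x * phi x) * x / Phib x - Real.log (Phib x) * (2 * x ^ 1) =
        (x / Phib x) * (-2 * Phib x * Real.log (Phib x) - x * phi x) := by
      field_simp; ring
    rw [expand]
    exact mul_nonneg (by positivity) (by linarith)

theorem stmt14 (t β : ℝ) (ht : 0 < t) (hβ : β ∈ Set.Ioc (0 : ℝ) 1) :
    gaussianReal 0 1 {x | β * t ≤ x} ≤ (gaussianReal 0 1 {x | t ≤ x}) ^ (β ^ 2) := by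
  obtain ⟨hβ0, hβ1⟩ := hβ
  have ha : 0 < β * t := mul_pos hβ0 ht
  have hle : β * t ≤ t := by nlinarith
  have hmono := R_mono (Set.mem_Ioi.2 ha) (Set.mem_Ioi.2 ht) hle
  have hlog : Real.log (Phib (β * t)) ≤ β ^ 2 * Real.log (Phib t) := by
    have h2 : (0:ℝ) < (β * t) ^ 2 := by positivity
    rw [div_le_div_iff₀ h2 (by positivity)] at hmono
    have : (β * t) ^ 2 = β ^ 2 * t ^ 2 := by ring
    nlinarith [sq_nonneg t]
  have hreal : Phib (β * t) ≤ Phib t ^ (β ^ 2) := by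
    rw [← Real.exp_log (Phib_pos (β * t)), Real.rpow_def_of_pos (Phib_pos t)]
    exact Real.exp_le_exp.2 (by linarith [hlog, mul_comm (Real.log (Phib t)) (β ^ 2)])
  rw [gauss_apply, gauss_apply]
  calc ENNReal.ofReal (Phib (β * t)) ≤ ENNReal.ofReal (Phib t ^ (β ^ 2)) :=
        ENNReal.ofReal_le_ofReal hreal
    _ = ENNReal.ofReal (Phib t) ^ (β ^ 2) := by
        rw [← ENNReal.ofReal_rpow_of_pos (Phib_pos t)]
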